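/- arXiv:1603.08970 — 4 statements merged into one kernel-verified Lean document; each statement's English description precedes it below -/
import Mathlib

section
/- Let P₁⁻¹ = (A + τ₁I)⁻¹ and P₂⁻¹ = (A + τ₂I)⁻¹ with τ₁ ≠ τ₂ and both shifted matrices invertible. Then for all positive integers m, n and every vector v, the vector P₁⁻ᵐP₂⁻ⁿv lies in the sum of the Krylov subspaces 𝒦ₘ(P₁⁻¹, P₁⁻¹v) + 𝒦ₙ(P₂⁻¹, P₂⁻¹v), where 𝒦ₖ(B, w) := span{w, Bw, …, B^{k−1}w}. -/
open Matrix

/-- The Krylov subspace 𝒦ₘ(B, w) = span{w, Bw, …, B^{m−1}w}. -/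
def krylov {K : Type*} [Field K] {n : ℕ} (m : ℕ)
    (B : Matrix (Fin n) (Fin n) K) (w : Fin n → K) : Submodule K (Fin n → K) :=
  Submodule.span K (Set.range fun k : Fin m => (B ^ (k : ℕ)) *ᵥ w)

theorem cross_powers_in_krylov_sum {K : Type*} [Field K] {n : ℕ}
    (A : Matrix (Fin n) (Fin n) K) (τ₁ τ₂ : K) (hτ : τ₁ ≠ τ₂)
    (h1 : IsUnit (A + τ₁ • (1 : Matrix (Fin n) (Fin n) K)))
    (h2 : IsUnit (A + τ₂ • (1 : Matrix (Fin n) (Fin n) K)))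
    (m p : ℕ) (hm : 0 < m) (hp : 0 < p) (v : Fin n → K) :
    ((A + τ₁ • 1)⁻¹ ^ m * (A + τ₂ • 1)⁻¹ ^ p) *ᵥ v ∈
      krylov m (A + τ₁ • 1)⁻¹ ((A + τ₁ • 1)⁻¹ *ᵥ v) ⊔
        krylov p (A + τ₂ • 1)⁻¹ ((A + τ₂ • 1)⁻¹ *ᵥ v) := by
  set P₁ := A + τ₁ • (1 : Matrix (Fin n) (Fin n) K) with hP₁
  set P₂ := A + τ₂ • (1 : Matrix (Fin n) (Fin n) K) with hP₂
  set Q₁ := P₁⁻¹ with hQ₁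
  set Q₂ := P₂⁻¹ with hQ₂
  have hd1 : IsUnit P₁.det := (Matrix.isUnit_iff_isUnit_det P₁).mp h1
  have hd2 : IsUnit P₂.det := (Matrix.isUnit_iff_isUnit_det P₂).mp h2
  have hc : τ₂ - τ₁ ≠ 0 := sub_ne_zero.mpr (Ne.symm hτ)
  set c : K := (τ₂ - τ₁)⁻¹ with hcdef
  -- resolvent identity
  have hres : Q₁ * Q₂ = c • (Q₁ - Q₂) := by
    have hdiff : Q₁ - Q₂ = (τ₂ - τ₁) • (Q₁ * Q₂) := by
      have h' : Q₁ * (P₂ - P₁) * Q₂ = Q₁ - Q₂ := by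
        rw [Matrix.mul_sub, Matrix.sub_mul, Matrix.mul_assoc,
          Matrix.mul_nonsing_inv P₂ hd2, Matrix.mul_one,
          hQ₁, Matrix.nonsing_inv_mul P₁ hd1, Matrix.one_mul]
      have hPP : P₂ - P₁ = (τ₂ - τ₁) • (1 : Matrix (Fin n) (Fin n) K) := by
        rw [hP₁, hP₂]
        rw [sub_smul]
        abel
      rw [hPP] at h'
      rw [← h']
      rw [Matrix.mul_smul, Matrix.mul_one, Matrix.smul_mul]
    rw [hdiff, smul_smul, hcdef, inv_mul_cancel₀ hc, one_smul]
  set S := krylov m Q₁ (Q₁ *ᵥ v) ⊔ krylov p Q₂ (Q₂ *ᵥ v) with hS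
  have mem1 : ∀ j : ℕ, j < m → ((Q₁ ^ (j + 1)) *ᵥ v) ∈ S := by
    intro j hj
    have : (Q₁ ^ (j + 1)) *ᵥ v = (Q₁ ^ j) *ᵥ (Q₁ *ᵥ v) := by
      rw [Matrix.mulVec_mulVec, ← pow_succ]
    rw [this]
    exact le_sup_left (α := Submodule K (Fin n → K))
      (Submodule.subset_span ⟨⟨j, hj⟩, rfl⟩)
  have mem2 : ∀ k : ℕ, k < p → ((Q₂ ^ (k + 1)) *ᵥ v) ∈ S := by
    intro k hk
    have : (Q₂ ^ (k + 1)) *ᵥ v = (Q₂ ^ k) *ᵥ (Q₂ *ᵥ v) := by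
      rw [Matrix.mulVec_mulVec, ← pow_succ]
    rw [this]
    exact le_sup_right (α := Submodule K (Fin n → K))
      (Submodule.subset_span ⟨⟨k, hk⟩, rfl⟩)
  have key : ∀ N : ℕ, ∀ j k : ℕ, j + k = N → j ≤ m → k ≤ p → 1 ≤ j + k →
      ((Q₁ ^ j * Q₂ ^ k) *ᵥ v) ∈ S := by
    intro N
    induction N using Nat.strong_induction_on with
    | _ N ih =>
      intro j k hN hj hk hjk
      match j, k with
      | 0, 0 => omega
      | j + 1, 0 =>
        simpa [pow_zero, Matrix.mul_one] using mem1 j (by omega)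
      | 0, k + 1 =>
        simpa [pow_zero, Matrix.one_mul] using mem2 k (by omega)
      | j + 1, k + 1 =>
        have hsplit : Q₁ ^ (j + 1) * Q₂ ^ (k + 1)
            = c • (Q₁ ^ (j + 1) * Q₂ ^ k - Q₁ ^ j * Q₂ ^ (k + 1)) := by
          have : Q₁ ^ (j + 1) * Q₂ ^ (k + 1) = Q₁ ^ j * (Q₁ * Q₂) * Q₂ ^ k := by
            rw [pow_succ, pow_succ']
            noncomm_ring
          rw [this, hres]
          rw [Matrix.mul_smul, Matrix.smul_mul]
          congr 1
          rw [Matrix.mul_sub, Matrix.sub_mul, ← pow_succ, mul_assoc, ← pow_succ']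
        rw [hsplit, Matrix.smul_mulVec, Matrix.sub_mulVec]
        refine Submodule.smul_mem _ _ (Submodule.sub_mem _ ?_ ?_)
        · exact ih (j + 1 + k) (by omega) (j + 1) k rfl hj (by omega) (by omega)
        · exact ih (j + (k + 1)) (by omega) j (k + 1) rfl (by omega) hk (by omega)
  exact key (m + p) m p rfl le_rfl le_rfl (by omega)
end

section
/- Let A be a square matrix, τ₁ ≠ τ₂ scalars with A + τ₁I and A + τ₂I invertible, and set Pⱼ⁻¹ = (A + τⱼI)⁻¹. For a vector b, let W ⊆ 𝕂ⁿ be the subspace spanned by all vectors of the form q(P₁⁻¹, P₂⁻¹)b where q ranges over monomials (words) of degree at most m in the two (non-commuting) variables. Then W = 𝒦_{m+1}(P₁⁻¹, b) + 𝒦_{m+1}(P₂⁻¹, b); consequently dim W ≤ 2m + 1. -/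
open Matrix

section aux
variable {K : Type*} [Field K] {n : ℕ}

lemma krylov_mono {m m' : ℕ} (h : m ≤ m') (B : Matrix (Fin n) (Fin n) K) (w : Fin n → K) :
    krylov m B w ≤ krylov m' B w := by
  apply Submodule.span_mono
  rintro x ⟨k, rfl⟩
  exact ⟨⟨k, lt_of_lt_of_le k.2 h⟩, rfl⟩

lemma pow_mem_krylov {m k : ℕ} (hk : k < m) (B : Matrix (Fin n) (Fin n) K) (w : Fin n → K) :
    (B ^ k) *ᵥ w ∈ krylov m B w :=
  Submodule.subset_span ⟨⟨k, hk⟩, rfl⟩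

lemma finrank_krylov_le (m : ℕ) (B : Matrix (Fin n) (Fin n) K) (w : Fin n → K) :
    Module.finrank K (krylov m B w) ≤ m := by
  have h := finrank_range_le_card (R := K) (fun k : Fin m => (B ^ (k : ℕ)) *ᵥ w)
  rw [Fintype.card_fin] at h
  exact h

lemma key_mem (Q₁ Q₂ : Matrix (Fin n) (Fin n) K) (c : K)
    (hkey : Q₁ * Q₂ = c • (Q₁ - Q₂)) (v : Fin n → K) :
    ∀ d a b : ℕ, a + b ≤ d →
      (Q₁ ^ a * Q₂ ^ b) *ᵥ v ∈ krylov (d + 1) Q₁ v ⊔ krylov (d + 1) Q₂ v := by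
  intro d
  induction d with
  | zero =>
    intro a b hab
    obtain ⟨rfl, rfl⟩ : a = 0 ∧ b = 0 := by omega
    simp only [pow_zero, one_mul]
    exact Submodule.mem_sup_left (by simpa using pow_mem_krylov (show 0 < 1 by omega) Q₁ v)
  | succ d ih =>
    intro a b hab
    match a, b with
    | 0, b =>
      simp only [pow_zero, one_mul]
      exact Submodule.mem_sup_right (pow_mem_krylov (by omega) Q₂ v)
    | a + 1, 0 =>
      simp only [pow_zero, mul_one]
      exact Submodule.mem_sup_left (pow_mem_krylov (by omega) Q₁ v)
    | a + 1, b + 1 =>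
      have hrw : Q₁ ^ (a + 1) * Q₂ ^ (b + 1)
          = c • (Q₁ ^ (a + 1) * Q₂ ^ b) - c • (Q₁ ^ a * Q₂ ^ (b + 1)) := by
        have : Q₁ ^ (a + 1) * Q₂ ^ (b + 1) = Q₁ ^ a * (Q₁ * Q₂) * Q₂ ^ b := by
          rw [pow_succ, pow_succ']; noncomm_ring
        rw [this, hkey]
        simp only [Matrix.mul_smul, Matrix.smul_mul, mul_sub, sub_mul, smul_sub]
        have e1 : Q₁ ^ a * Q₁ * Q₂ ^ b = Q₁ ^ (a + 1) * Q₂ ^ b := by rw [pow_succ]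
        have e2 : Q₁ ^ a * Q₂ * Q₂ ^ b = Q₁ ^ a * Q₂ ^ (b + 1) := by
          rw [pow_succ', mul_assoc]
        rw [e1, e2]
      rw [hrw, Matrix.sub_mulVec, Matrix.smul_mulVec, Matrix.smul_mulVec]
      have h1 := ih (a + 1) b (by omega)
      have h2 := ih a (b + 1) (by omega)
      have hle : krylov (d + 1) Q₁ v ⊔ krylov (d + 1) Q₂ v
          ≤ krylov (d + 2) Q₁ v ⊔ krylov (d + 2) Q₂ v :=
        sup_le_sup (krylov_mono (by omega) _ _) (krylov_mono (by omega) _ _)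
      exact Submodule.sub_mem _ (Submodule.smul_mem _ _ (hle h1))
        (Submodule.smul_mem _ _ (hle h2))
end aux

section aux2
variable {K : Type*} [Field K] {n : ℕ}

lemma word_prod (Q₁ Q₂ : Matrix (Fin n) (Fin n) K) (hcomm : Q₁ * Q₂ = Q₂ * Q₁)
    (P : Fin 2 → Matrix (Fin n) (Fin n) K) (hP0 : P 0 = Q₁) (hP1 : P 1 = Q₂) :
    ∀ w : List (Fin 2), (w.map P).prod = Q₁ ^ (w.count 0) * Q₂ ^ (w.count 1) ∧
      w.count 0 + w.count 1 = w.length := by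
  intro w
  induction w with
  | nil => simp
  | cons i t ih =>
    obtain ⟨ihp, ihc⟩ := ih
    fin_cases i
    · refine ⟨?_, ?_⟩
      · simp only [List.map_cons, List.prod_cons, List.count_cons, ihp]
        norm_num
        rw [hP0]
        simp only [← mul_assoc]
        rw [← pow_succ']
      · simp only [List.count_cons, List.length_cons]
        norm_num
        omega
    · refine ⟨?_, ?_⟩
      · simp only [List.map_cons, List.prod_cons, List.count_cons, ihp, hP1]
        norm_num
        have hc : Commute Q₂ (Q₁ ^ t.count 0) := (Commute.symm hcomm).pow_right _
        rw [hP1]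
        simp only [← mul_assoc]
        rw [hc.eq, mul_assoc, ← pow_succ']
      · simp only [List.count_cons, List.length_cons]
        norm_num
        omega
end aux2

theorem word_span_eq_krylov_sum {K : Type*} [Field K] {n : ℕ}
    (A : Matrix (Fin n) (Fin n) K) (τ₁ τ₂ : K) (hτ : τ₁ ≠ τ₂)
    (h1 : IsUnit (A + τ₁ • (1 : Matrix (Fin n) (Fin n) K)))
    (h2 : IsUnit (A + τ₂ • (1 : Matrix (Fin n) (Fin n) K)))
    (b : Fin n → K) (m : ℕ)
    (P : Fin 2 → Matrix (Fin n) (Fin n) K)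
    (hP1 : P 0 = (A + τ₁ • 1)⁻¹) (hP2 : P 1 = (A + τ₂ • 1)⁻¹)
    (W : Submodule K (Fin n → K))
    (hW : W = Submodule.span K
      {x | ∃ w : List (Fin 2), w.length ≤ m ∧ x = (w.map P).prod *ᵥ b}) :
    W = krylov (m + 1) (A + τ₁ • 1)⁻¹ b ⊔ krylov (m + 1) (A + τ₂ • 1)⁻¹ b ∧
      Module.finrank K W ≤ 2 * m + 1 := by
  set B₁ := A + τ₁ • (1 : Matrix (Fin n) (Fin n) K) with hB₁
  set B₂ := A + τ₂ • (1 : Matrix (Fin n) (Fin n) K) with hB₂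
  set Q₁ := B₁⁻¹ with hQ₁
  set Q₂ := B₂⁻¹ with hQ₂
  have hd1 : IsUnit B₁.det := (Matrix.isUnit_iff_isUnit_det _).mp h1
  have hd2 : IsUnit B₂.det := (Matrix.isUnit_iff_isUnit_det _).mp h2
  have hBcomm : B₁ * B₂ = B₂ * B₁ := by
    rw [hB₁, hB₂]
    simp only [add_mul, mul_add, smul_mul_assoc, mul_smul_comm, one_mul, mul_one, smul_smul,
      smul_add]
    rw [mul_comm τ₁ τ₂]
    abel
  have hQcomm : Q₁ * Q₂ = Q₂ * Q₁ := by
    rw [hQ₁, hQ₂, ← Matrix.mul_inv_rev, ← Matrix.mul_inv_rev, hBcomm]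
  have hτ' : τ₂ - τ₁ ≠ 0 := sub_ne_zero.mpr (Ne.symm hτ)
  set c : K := (τ₂ - τ₁)⁻¹ with hc
  have hkey : Q₁ * Q₂ = c • (Q₁ - Q₂) := by
    have hdiff : B₂ - B₁ = (τ₂ - τ₁) • (1 : Matrix (Fin n) (Fin n) K) := by
      rw [hB₁, hB₂, sub_smul]; abel
    have hmid : Q₁ * (B₂ - B₁) * Q₂ = Q₁ - Q₂ := by
      rw [mul_sub, sub_mul, mul_assoc, Matrix.mul_nonsing_inv _ hd2, mul_one,
        Matrix.nonsing_inv_mul _ hd1, one_mul]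
    rw [hdiff] at hmid
    have : (τ₂ - τ₁) • (Q₁ * Q₂) = Q₁ - Q₂ := by
      rw [← hmid]
      rw [Matrix.mul_smul, Matrix.smul_mul, mul_one]
    rw [← this, hc, smul_smul, inv_mul_cancel₀ hτ', one_smul]
  have hWP := word_prod Q₁ Q₂ hQcomm P hP1 hP2
  have hEq : W = krylov (m + 1) Q₁ b ⊔ krylov (m + 1) Q₂ b := by
    rw [hW]
    apply le_antisymm
    · rw [Submodule.span_le]
      rintro x ⟨w, hlen, rfl⟩
      obtain ⟨hp, hcnt⟩ := hWP w
      rw [hp]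
      exact key_mem Q₁ Q₂ c hkey b m _ _ (by omega)
    · apply sup_le
      · rw [krylov, Submodule.span_le]
        rintro x ⟨k, rfl⟩
        refine Submodule.subset_span ⟨List.replicate (k : ℕ) 0, ?_, ?_⟩
        · simpa using Fin.is_le k
        · rw [List.map_replicate, List.prod_replicate, hP1]
      · rw [krylov, Submodule.span_le]
        rintro x ⟨k, rfl⟩
        refine Submodule.subset_span ⟨List.replicate (k : ℕ) 1, ?_, ?_⟩
        · simpa using Fin.is_le k
        · rw [List.map_replicate, List.prod_replicate, hP2]
  refine ⟨hEq, ?_⟩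
  rw [hEq]
  by_cases hb : b = 0
  · subst hb
    have hbot : ∀ (M : Matrix (Fin n) (Fin n) K), krylov (m + 1) M 0 = ⊥ := by
      intro M
      simp [krylov, Matrix.mulVec_zero]
    rw [hbot, hbot, sup_bot_eq, finrank_bot]
    omega
  · have hmem1 : b ∈ krylov (m + 1) Q₁ b := by
      simpa using pow_mem_krylov (show 0 < m + 1 by omega) Q₁ b
    have hmem2 : b ∈ krylov (m + 1) Q₂ b := by
      simpa using pow_mem_krylov (show 0 < m + 1 by omega) Q₂ b
    have hinf : 0 < Module.finrank K ↥(krylov (m + 1) Q₁ b ⊓ krylov (m + 1) Q₂ b) := by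
      apply Module.finrank_pos_iff_exists_ne_zero.mpr
      exact ⟨⟨b, Submodule.mem_inf.mpr ⟨hmem1, hmem2⟩⟩, by simpa using hb⟩
    have heq := Submodule.finrank_sup_add_finrank_inf_eq
      (krylov (m + 1) Q₁ b) (krylov (m + 1) Q₂ b)
    have hk1 := finrank_krylov_le (m + 1) Q₁ b
    have hk2 := finrank_krylov_le (m + 1) Q₂ b
    omega
end

section
/- Let A be a square matrix, τ₁, …, τ_{n_p} pairwise distinct scalars with each A + τⱼI invertible, Pⱼ⁻¹ = (A + τⱼI)⁻¹, and b a vector. Then every vector of the form q(P₁⁻¹, …, P_{n_p}⁻¹)b, where q is a multivariate non-commuting polynomial of degree at most m with q(0, …, 0) = 1, can be written as b + ∑_{j=1}^{n_p} pⱼ(Pⱼ⁻¹)Pⱼ⁻¹b for single-variable polynomials pⱼ of degree at most m − 1. -/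
open Matrix Polynomial

private lemma sum_mulVec' {K : Type*} [Field K] {n : ℕ} {ι : Type*} (s : Finset ι)
    (M : ι → Matrix (Fin n) (Fin n) K) (b : Fin n → K) :
    (∑ i ∈ s, M i) *ᵥ b = ∑ i ∈ s, M i *ᵥ b := by
  induction s using Finset.cons_induction with
  | empty => simp
  | cons a s ha ih => simp [Finset.sum_cons, Matrix.add_mulVec, ih]

private lemma res_id {K : Type*} [Field K] {n np : ℕ}
    (A : Matrix (Fin n) (Fin n) K) (τ : Fin np → K)
    (hU : ∀ j, IsUnit (A + τ j • (1 : Matrix (Fin n) (Fin n) K)))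
    (P : Fin np → Matrix (Fin n) (Fin n) K)
    (hP : ∀ j, P j = (A + τ j • 1)⁻¹) (i j : Fin np) :
    P i - P j = (τ j - τ i) • (P i * P j) := by
  have hdi : IsUnit (A + τ i • (1:Matrix (Fin n) (Fin n) K)).det :=
    (Matrix.isUnit_iff_isUnit_det _).mp (hU i)
  have hdj : IsUnit (A + τ j • (1:Matrix (Fin n) (Fin n) K)).det :=
    (Matrix.isUnit_iff_isUnit_det _).mp (hU j)
  have h1 : P i * (A + τ i • 1) = 1 := by rw [hP]; exact Matrix.nonsing_inv_mul _ hdi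
  have h2 : (A + τ j • 1) * P j = 1 := by rw [hP]; exact Matrix.mul_nonsing_inv _ hdj
  calc P i - P j = P i * ((A + τ j • 1) * P j) - (P i * (A + τ i • 1)) * P j := by
        rw [h1, h2, mul_one, one_mul]
    _ = P i * (((τ j - τ i) • (1:Matrix (Fin n) (Fin n) K)) * P j) := by
        rw [sub_smul]; noncomm_ring
    _ = (τ j - τ i) • (P i * P j) := by
        rw [smul_mul_assoc, mul_smul_comm, one_mul]

private lemma aux_pow {K : Type*} [Field K] {n np : ℕ}
    (A : Matrix (Fin n) (Fin n) K) (τ : Fin np → K)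
    (hU : ∀ j, IsUnit (A + τ j • (1 : Matrix (Fin n) (Fin n) K)))
    (P : Fin np → Matrix (Fin n) (Fin n) K)
    (hP : ∀ j, P j = (A + τ j • 1)⁻¹) (i j : Fin np) (hij : τ i ≠ τ j) (t : ℕ) :
    ∃ (cc : K) (r : Polynomial K), r.natDegree ≤ t ∧
      P i * P j ^ (t+1) = cc • P i + (aeval (P j) r) * P j := by
  have hd : (τ j - τ i) ≠ 0 := sub_ne_zero.mpr (Ne.symm hij)
  set d : K := (τ j - τ i)⁻¹ with hdd
  have hbase : P i * P j = d • P i - d • P j := by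
    have := res_id A τ hU P hP i j
    have h2 : d • (P i - P j) = d • ((τ j - τ i) • (P i * P j)) := by rw [this]
    rw [smul_smul, inv_mul_cancel₀ hd, one_smul, smul_sub] at h2
    exact h2.symm
  induction t with
  | zero =>
    refine ⟨d, C (-d), by simp, ?_⟩
    rw [pow_one, hbase, aeval_C]
    simp [Algebra.algebraMap_eq_smul_one, smul_mul_assoc, sub_eq_add_neg]
  | succ t ih =>
    obtain ⟨cc, r, hr, heq⟩ := ih
    refine ⟨cc * d, r * X - C (cc * d), ?_, ?_⟩
    · refine (natDegree_sub_le _ _).trans (max_le ?_ ?_)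
      · refine natDegree_mul_le.trans ?_
        rw [natDegree_X]
        omega
      · rw [natDegree_C]
        exact Nat.zero_le _
    · have h0 : P i * P j ^ (t+1+1) = (P i * P j ^ (t+1)) * P j := by
        rw [pow_succ, ← mul_assoc]
      rw [h0, heq, add_mul, smul_mul_assoc, hbase, _root_.map_sub, _root_.map_mul,
        aeval_X, aeval_C, Algebra.algebraMap_eq_smul_one, smul_sub, sub_mul,
        smul_mul_assoc, one_mul, mul_assoc]
      simp only [smul_smul]
      abel

private lemma aux_cross {K : Type*} [Field K] {n np : ℕ}
    (A : Matrix (Fin n) (Fin n) K) (τ : Fin np → K)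
    (hU : ∀ j, IsUnit (A + τ j • (1 : Matrix (Fin n) (Fin n) K)))
    (P : Fin np → Matrix (Fin n) (Fin n) K)
    (hP : ∀ j, P j = (A + τ j • 1)⁻¹) (i j : Fin np) (hij : τ i ≠ τ j)
    (q : Polynomial K) :
    ∃ ri rj : Polynomial K, ri.natDegree ≤ q.natDegree ∧ rj.natDegree ≤ q.natDegree ∧
      P i * (aeval (P j) q * P j) = aeval (P i) ri * P i + aeval (P j) rj * P j := by
  -- choose data for each exponent
  have hch : ∀ t : ℕ, ∃ (cc : K) (r : Polynomial K), r.natDegree ≤ t ∧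
      P i * P j ^ (t+1) = cc • P i + (aeval (P j) r) * P j :=
    fun t => aux_pow A τ hU P hP i j hij t
  choose cc r hr heq using hch
  refine ⟨C (∑ t ∈ q.support, q.coeff t * cc t), ∑ t ∈ q.support, q.coeff t • r t,
    by rw [natDegree_C]; exact Nat.zero_le _, ?_, ?_⟩
  · refine natDegree_sum_le_of_forall_le _ _ (fun t ht => ?_)
    exact (natDegree_smul_le _ _).trans ((hr t).trans (le_natDegree_of_mem_supp t ht))
  · conv_lhs => rw [q.as_sum_support_C_mul_X_pow]
    rw [map_sum, Finset.sum_mul, Finset.mul_sum]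
    have : ∀ t ∈ q.support,
        P i * (aeval (P j) (C (q.coeff t) * X ^ t) * P j)
          = (q.coeff t * cc t) • P i + (q.coeff t • aeval (P j) (r t)) * P j := by
      intro t ht
      rw [_root_.map_mul, aeval_C, map_pow, aeval_X]
      have h1 : P i * ((algebraMap K _) (q.coeff t) * P j ^ t * P j)
          = q.coeff t • (P i * P j ^ (t+1)) := by
        simp only [Algebra.algebraMap_eq_smul_one]
        noncomm_ring
      rw [h1, heq, smul_add, smul_smul, smul_mul_assoc]
    rw [Finset.sum_congr rfl this, Finset.sum_add_distrib]
    congr 1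
    · rw [aeval_C, Algebra.algebraMap_eq_smul_one, Finset.sum_smul, Finset.sum_mul]
      simp [smul_mul_assoc]
    · rw [map_sum, Finset.sum_mul]
      refine Finset.sum_congr rfl (fun t ht => ?_)
      rw [_root_.map_smul, smul_mul_assoc]

private lemma aux_step {K : Type*} [Field K] {n np : ℕ}
    (A : Matrix (Fin n) (Fin n) K) (τ : Fin np → K)
    (hτ : ∀ i j, i ≠ j → τ i ≠ τ j)
    (hU : ∀ j, IsUnit (A + τ j • (1 : Matrix (Fin n) (Fin n) K)))
    (P : Fin np → Matrix (Fin n) (Fin n) K)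
    (hP : ∀ j, P j = (A + τ j • 1)⁻¹) (i j : Fin np) (q : Polynomial K) :
    ∃ p : Fin np → Polynomial K, (∀ k, (p k).natDegree ≤ q.natDegree + 1) ∧
      P i * (aeval (P j) q * P j) = ∑ k, aeval (P k) (p k) * P k := by
  by_cases hij : i = j
  · subst hij
    refine ⟨Function.update (fun _ => 0) i (X * q), ?_, ?_⟩
    · intro k
      by_cases hk : k = i
      · subst hk
        rw [Function.update_self]
        refine natDegree_mul_le.trans ?_
        rw [natDegree_X]
        omega
      · rw [Function.update_of_ne hk]; simp
    · rw [Fintype.sum_eq_single i (fun k hk => by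
        rw [Function.update_of_ne hk]; simp)]
      rw [Function.update_self, _root_.map_mul, aeval_X, mul_assoc]
  · obtain ⟨ri, rj, hri, hrj, heq⟩ := aux_cross A τ hU P hP i j (hτ i j hij) q
    refine ⟨Function.update (Function.update (fun _ => 0) j rj) i ri, ?_, ?_⟩
    · intro k
      by_cases hk : k = i
      · subst hk; rw [Function.update_self]; omega
      · rw [Function.update_of_ne hk]
        by_cases hk' : k = j
        · subst hk'; rw [Function.update_self]; omega
        · rw [Function.update_of_ne hk']; simp
    · rw [heq]
      rw [Finset.sum_eq_add_of_mem i j (Finset.mem_univ _) (Finset.mem_univ _) hij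
        (fun k _ hk => by
          rw [Function.update_of_ne hk.1, Function.update_of_ne hk.2]; simp)]
      rw [Function.update_self, Function.update_of_ne (Ne.symm hij), Function.update_self]

private lemma word_decomp {K : Type*} [Field K] {n np : ℕ}
    (A : Matrix (Fin n) (Fin n) K) (τ : Fin np → K)
    (hτ : ∀ i j, i ≠ j → τ i ≠ τ j)
    (hU : ∀ j, IsUnit (A + τ j • (1 : Matrix (Fin n) (Fin n) K)))
    (P : Fin np → Matrix (Fin n) (Fin n) K)
    (hP : ∀ j, P j = (A + τ j • 1)⁻¹) :
    ∀ (w : List (Fin np)), w ≠ [] →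
    ∃ p : Fin np → Polynomial K, (∀ j, (p j).natDegree ≤ w.length - 1) ∧
      (w.map P).prod = ∑ j, aeval (P j) (p j) * P j := by
  intro w
  induction w with
  | nil => intro h; exact absurd rfl h
  | cons i w' ih =>
    intro _
    by_cases hw' : w' = []
    · subst hw'
      refine ⟨Function.update (fun _ => 0) i 1, fun j => by
        by_cases hj : j = i
        · subst hj; simp
        · rw [Function.update_of_ne hj]; simp, ?_⟩
      rw [Fintype.sum_eq_single i (fun k hk => by rw [Function.update_of_ne hk]; simp)]
      simp
    · obtain ⟨q, hq, heq⟩ := ih hw'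
      have hst : ∀ j : Fin np, ∃ p : Fin np → Polynomial K,
          (∀ k, (p k).natDegree ≤ (q j).natDegree + 1) ∧
          P i * (aeval (P j) (q j) * P j) = ∑ k, aeval (P k) (p k) * P k :=
        fun j => aux_step A τ hτ hU P hP i j (q j)
      choose pp hpp hppe using hst
      refine ⟨fun k => ∑ j, pp j k, ?_, ?_⟩
      · intro k
        refine natDegree_sum_le_of_forall_le _ _ (fun j _ => ?_)
        have h1 : (q j).natDegree + 1 ≤ w'.length := by
          have := hq j
          have : w'.length ≥ 1 := by
            cases w' with
            | nil => exact absurd rfl hw'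
            | cons _ _ => simp
          omega
        have := hpp j k
        simp only [List.length_cons]
        omega
      · rw [List.map_cons, List.prod_cons, heq, Finset.mul_sum]
        rw [Finset.sum_congr rfl (fun j _ => hppe j)]
        rw [Finset.sum_comm]
        refine Finset.sum_congr rfl (fun k _ => ?_)
        rw [← Finset.sum_mul, ← map_sum]

theorem noncommuting_poly_reduction {K : Type*} [Field K] {n np : ℕ}
    (A : Matrix (Fin n) (Fin n) K) (τ : Fin np → K)
    (hτ : ∀ i j, i ≠ j → τ i ≠ τ j)
    (hU : ∀ j, IsUnit (A + τ j • (1 : Matrix (Fin n) (Fin n) K)))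
    (P : Fin np → Matrix (Fin n) (Fin n) K)
    (hP : ∀ j, P j = (A + τ j • 1)⁻¹)
    (b : Fin n → K) (m : ℕ)
    (S : Finset (List (Fin np)))
    (hS : ∀ w ∈ S, w ≠ [] ∧ w.length ≤ m)
    (c : List (Fin np) → K) :
    ∃ p : Fin np → Polynomial K,
      (∀ j, (p j).natDegree ≤ m - 1) ∧
      b + ∑ w ∈ S, c w • ((w.map P).prod *ᵥ b) =
        b + ∑ j, (Polynomial.aeval (P j) (p j) : Matrix (Fin n) (Fin n) K) *ᵥ (P j *ᵥ b) := by
  have hch : ∀ w : List (Fin np), ∀ _ : w ∈ S,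
      ∃ p : Fin np → Polynomial K, (∀ j, (p j).natDegree ≤ w.length - 1) ∧
        (w.map P).prod = ∑ j, aeval (P j) (p j) * P j :=
    fun w hw => word_decomp A τ hτ hU P hP w (hS w hw).1
  choose pw hpwdeg hpweq using hch
  refine ⟨fun j => ∑ w ∈ S.attach, c w.1 • pw w.1 w.2 j, ?_, ?_⟩
  · intro j
    refine natDegree_sum_le_of_forall_le _ _ (fun w _ => ?_)
    refine (natDegree_smul_le _ _).trans ((hpwdeg w.1 w.2 j).trans ?_)
    have h1 := (hS w.1 w.2).2
    omega
  · congr 1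
    have hR : ∀ j : Fin np,
        (aeval (P j) (∑ w ∈ S.attach, c w.1 • pw w.1 w.2 j) : Matrix (Fin n) (Fin n) K)
          *ᵥ (P j *ᵥ b)
        = ∑ w ∈ S.attach, c w.1 • ((aeval (P j) (pw w.1 w.2 j) * P j) *ᵥ b) := by
      intro j
      rw [map_sum, Matrix.mulVec_mulVec, Finset.sum_mul, sum_mulVec']
      refine Finset.sum_congr rfl (fun w _ => ?_)
      rw [_root_.map_smul, smul_mul_assoc, Matrix.smul_mulVec]
    rw [Finset.sum_congr rfl (fun j _ => hR j), Finset.sum_comm]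
    rw [← Finset.sum_attach S (fun w => c w • ((w.map P).prod *ᵥ b))]
    refine Finset.sum_congr rfl (fun w _ => ?_)
    rw [← Finset.smul_sum, hpweq w.1 w.2, sum_mulVec']
end

section
/- Let A be a square matrix, τ₁ ≠ τ₂ scalars with A + τ₁I, A + τ₂I invertible, Pⱼ⁻¹ = (A + τⱼI)⁻¹, and b a nonzero vector. Then the subalgebra of 𝕂^{n×n} generated by P₁⁻¹ and P₂⁻¹ applied to b equals 𝒦_∞(P₁⁻¹, b) + 𝒦_∞(P₂⁻¹, b), where 𝒦_∞(B, w) denotes the span of {Bᵏw : k ≥ 0}. -/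
open Matrix

/-- The full Krylov subspace 𝒦_∞(B, w) = span{Bᵏw : k ∈ ℕ}. -/
def krylovInf {K : Type*} [Field K] {n : ℕ}
    (B : Matrix (Fin n) (Fin n) K) (w : Fin n → K) : Submodule K (Fin n → K) :=
  Submodule.span K (Set.range fun k : ℕ => (B ^ k) *ᵥ w)

lemma krylov_mem {K : Type*} [Field K] {n : ℕ}
    (B : Matrix (Fin n) (Fin n) K) (w : Fin n → K) (k : ℕ) :
    (B ^ k) *ᵥ w ∈ krylovInf B w :=
  Submodule.subset_span ⟨k, rfl⟩

lemma resolvent_aux {K : Type*} [Field K] {n : ℕ}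
    (M₁ M₂ : Matrix (Fin n) (Fin n) K) (h1 : IsUnit M₁.det) (h2 : IsUnit M₂.det)
    (c : K) (h : c • (1 : Matrix (Fin n) (Fin n) K) = M₂ - M₁) :
    c • (M₁⁻¹ * M₂⁻¹) = M₁⁻¹ - M₂⁻¹ := by
  have : c • (M₁⁻¹ * M₂⁻¹) = M₁⁻¹ * (c • (1 : Matrix (Fin n) (Fin n) K)) * M₂⁻¹ := by
    rw [Matrix.mul_smul, Matrix.mul_one, Matrix.smul_mul]
  rw [this, h, Matrix.mul_sub, Matrix.sub_mul, Matrix.mul_nonsing_inv_cancel_right _ _ h2,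
    Matrix.nonsing_inv_mul _ h1, Matrix.one_mul]

lemma step_mem {K : Type*} [Field K] {n : ℕ}
    (B C : Matrix (Fin n) (Fin n) K) (b : Fin n → K) (c : K)
    (hBC : B * C = c • B - c • C) (k : ℕ) :
    B *ᵥ ((C ^ k) *ᵥ b) ∈ krylovInf B b ⊔ krylovInf C b := by
  induction k with
  | zero =>
    simp only [pow_zero, Matrix.one_mulVec]
    exact Submodule.mem_sup_left (by simpa using krylov_mem B b 1)
  | succ k ih =>
    have hm : B * C ^ (k+1) = c • (B * C ^ k) - c • (C ^ (k+1)) := by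
      rw [pow_succ', ← mul_assoc, hBC, Matrix.sub_mul, Matrix.smul_mul, Matrix.smul_mul,
        ← pow_succ']
    have h1 : B *ᵥ ((C ^ (k+1)) *ᵥ b)
        = c • (B *ᵥ ((C ^ k) *ᵥ b)) - c • ((C ^ (k+1)) *ᵥ b) := by
      rw [Matrix.mulVec_mulVec, hm, Matrix.sub_mulVec, Matrix.smul_mulVec,
        Matrix.smul_mulVec, ← Matrix.mulVec_mulVec]
    rw [h1]
    exact Submodule.sub_mem _ (Submodule.smul_mem _ _ ih)
      (Submodule.smul_mem _ _ (Submodule.mem_sup_right (krylov_mem C b (k+1))))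

theorem word_algebra_eq_krylov_sum {K : Type*} [Field K] {n : ℕ}
    (A : Matrix (Fin n) (Fin n) K) (τ₁ τ₂ : K) (hτ : τ₁ ≠ τ₂)
    (h1 : IsUnit (A + τ₁ • (1 : Matrix (Fin n) (Fin n) K)))
    (h2 : IsUnit (A + τ₂ • (1 : Matrix (Fin n) (Fin n) K)))
    (b : Fin n → K) (hb : b ≠ 0)
    (P : Fin 2 → Matrix (Fin n) (Fin n) K)
    (hP1 : P 0 = (A + τ₁ • 1)⁻¹) (hP2 : P 1 = (A + τ₂ • 1)⁻¹) :
    Submodule.span K {x | ∃ w : List (Fin 2), x = (w.map P).prod *ᵥ b} =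
      krylovInf (A + τ₁ • 1)⁻¹ b ⊔ krylovInf (A + τ₂ • 1)⁻¹ b := by
  set M₁ := A + τ₁ • (1 : Matrix (Fin n) (Fin n) K) with hM₁
  set M₂ := A + τ₂ • (1 : Matrix (Fin n) (Fin n) K) with hM₂
  have hd1 : IsUnit M₁.det := (Matrix.isUnit_iff_isUnit_det _).mp h1
  have hd2 : IsUnit M₂.det := (Matrix.isUnit_iff_isUnit_det _).mp h2
  have hc : τ₂ - τ₁ ≠ 0 := sub_ne_zero.mpr (Ne.symm hτ)
  set c : K := (τ₂ - τ₁)⁻¹ with hcdef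
  have hr1 : (τ₂ - τ₁) • (M₁⁻¹ * M₂⁻¹) = M₁⁻¹ - M₂⁻¹ := by
    apply resolvent_aux _ _ hd1 hd2
    rw [hM₁, hM₂]
    rw [add_sub_add_left_eq_sub, ← sub_smul]
  have hr2 : (τ₁ - τ₂) • (M₂⁻¹ * M₁⁻¹) = M₂⁻¹ - M₁⁻¹ := by
    apply resolvent_aux _ _ hd2 hd1
    rw [hM₁, hM₂]
    rw [add_sub_add_left_eq_sub, ← sub_smul]
  have hBC : M₁⁻¹ * M₂⁻¹ = c • M₁⁻¹ - c • M₂⁻¹ := by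
    rw [← smul_sub, ← hr1, smul_smul, hcdef, inv_mul_cancel₀ hc, one_smul]
  have hc' : τ₁ - τ₂ ≠ 0 := sub_ne_zero.mpr hτ
  have hCB : M₂⁻¹ * M₁⁻¹ = (-c) • M₂⁻¹ - (-c) • M₁⁻¹ := by
    have hone : -c * (τ₁ - τ₂) = 1 := by rw [hcdef]; field_simp; ring
    rw [← smul_sub, ← hr2, smul_smul, hone, one_smul]
  set S : Submodule K (Fin n → K) := krylovInf M₁⁻¹ b ⊔ krylovInf M₂⁻¹ b with hS
  -- closure of S under both matrices
  have hclos : ∀ (B : Matrix (Fin n) (Fin n) K),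
      (∀ k, B *ᵥ ((M₁⁻¹ ^ k) *ᵥ b) ∈ S) → (∀ k, B *ᵥ ((M₂⁻¹ ^ k) *ᵥ b) ∈ S) →
      ∀ x ∈ S, B *ᵥ x ∈ S := by
    intro B hB1 hB2 x hx
    rw [hS, krylovInf, krylovInf, ← Submodule.span_union] at hx
    induction hx using Submodule.span_induction with
    | mem y hy =>
      rcases hy with ⟨k, rfl⟩ | ⟨k, rfl⟩
      · exact hB1 k
      · exact hB2 k
    | zero => simpa using Submodule.zero_mem S
    | add y z _ _ hy hz => rw [Matrix.mulVec_add]; exact Submodule.add_mem S hy hz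
    | smul a y _ hy => rw [Matrix.mulVec_smul]; exact Submodule.smul_mem S a hy
  have hclo1 : ∀ x ∈ S, M₁⁻¹ *ᵥ x ∈ S := by
    apply hclos
    · intro k
      rw [Matrix.mulVec_mulVec, ← pow_succ']
      exact Submodule.mem_sup_left (krylov_mem _ b (k+1))
    · exact step_mem M₁⁻¹ M₂⁻¹ b c hBC
  have hclo2 : ∀ x ∈ S, M₂⁻¹ *ᵥ x ∈ S := by
    apply hclos
    · intro k
      have := step_mem M₂⁻¹ M₁⁻¹ b (-c) hCB k
      rw [hS, sup_comm]
      exact this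
    · intro k
      rw [Matrix.mulVec_mulVec, ← pow_succ']
      exact Submodule.mem_sup_right (krylov_mem _ b (k+1))
  apply le_antisymm
  · rw [Submodule.span_le]
    rintro x ⟨w, rfl⟩
    induction w with
    | nil =>
      simp only [List.map_nil, List.prod_nil, Matrix.one_mulVec]
      exact Submodule.mem_sup_left (by simpa using krylov_mem M₁⁻¹ b 0)
    | cons i w ih =>
      rw [List.map_cons, List.prod_cons, ← Matrix.mulVec_mulVec]
      fin_cases i
      · simpa only [Fin.zero_eta, Fin.isValue, hP1, SetLike.mem_coe] using hclo1 _ ih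
      · simpa only [Fin.mk_one, Fin.isValue, hP2, SetLike.mem_coe] using hclo2 _ ih
  · apply sup_le
    · rw [krylovInf, Submodule.span_le]
      rintro x ⟨k, rfl⟩
      apply Submodule.subset_span
      exact ⟨List.replicate k 0, by simp [hP1, List.prod_replicate]⟩
    · rw [krylovInf, Submodule.span_le]
      rintro x ⟨k, rfl⟩
      apply Submodule.subset_span
      exact ⟨List.replicate k 1, by simp [hP2, List.prod_replicate]⟩
end
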